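/- For every ε ∈ (1/2, 1), the probability of being at the origin after 2n steps in the Gillis random walk converges: lim_{n→∞} P_{2n} = 2 − 1/ε. -/

import Mathlib

open Filter Finset
set_option linter.unusedSectionVars false
set_option maxHeartbeats 1000000

/-- Probability of a right step in the Gillis walk. -/
noncomputable def gR (ε : ℝ) (j : ℤ) : ℝ :=
  if j = 0 then 1 / 2 else (1 - ε / (j : ℝ)) / 2

/-- Probability of a left step in the Gillis walk. -/
noncomputable def gL (ε : ℝ) (j : ℤ) : ℝ :=
  if j = 0 then 1 / 2 else (1 + ε / (j : ℝ)) / 2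

/-- Occupation probabilities of the Gillis walk started at the origin. -/
noncomputable def gP (ε : ℝ) : ℕ → ℤ → ℝ
  | 0, j => if j = 0 then 1 else 0
  | n + 1, j => gR ε (j - 1) * gP ε n (j - 1) + gL ε (j + 1) * gP ε n (j + 1)

section basic
variable {ε : ℝ} (hε : ε ∈ Set.Ioo (1 / 2 : ℝ) 1)
include hε

lemma eps_pos : (0:ℝ) < ε := lt_trans (by norm_num) hε.1

lemma absdiv_le {j : ℤ} (hj : j ≠ 0) : |ε / (j:ℝ)| ≤ ε := by
  rw [abs_div]
  rw [abs_of_nonneg (le_of_lt (eps_pos hε))]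
  have h1 : (1:ℝ) ≤ |(j:ℝ)| := by
    have h2 : (1:ℤ) ≤ |j| := Int.one_le_abs hj
    calc (1:ℝ) ≤ ((|j| : ℤ) : ℝ) := by exact_mod_cast h2
    _ = |(j:ℝ)| := by rw [Int.cast_abs]
  calc ε / |(j:ℝ)| ≤ ε / 1 := by
        apply div_le_div_of_nonneg_left (le_of_lt (eps_pos hε)) one_pos h1
  _ = ε := by ring

lemma gR_lb (j : ℤ) : (1 - ε)/2 ≤ gR ε j := by
  unfold gR
  have h0 := eps_pos hε
  split_ifs with h
  · linarith
  · have := absdiv_le hε h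
    have : ε / (j:ℝ) ≤ ε := le_trans (le_abs_self _) this
    linarith

lemma gL_lb (j : ℤ) : (1 - ε)/2 ≤ gL ε j := by
  unfold gL
  have h0 := eps_pos hε
  split_ifs with h
  · linarith
  · have h1 := absdiv_le hε h
    have : -ε ≤ ε / (j:ℝ) := by
      have := neg_abs_le (ε / (j:ℝ)); linarith
    linarith

lemma gR_pos (j : ℤ) : 0 < gR ε j := lt_of_lt_of_le (by nlinarith [hε.2]) (gR_lb hε j)
lemma gL_pos (j : ℤ) : 0 < gL ε j := lt_of_lt_of_le (by nlinarith [hε.2]) (gL_lb hε j)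
lemma gR_nonneg (j : ℤ) : 0 ≤ gR ε j := le_of_lt (gR_pos hε j)
lemma gL_nonneg (j : ℤ) : 0 ≤ gL ε j := le_of_lt (gL_pos hε j)

lemma gRL_sum (j : ℤ) : gR ε j + gL ε j = 1 := by
  unfold gR gL; split_ifs <;> ring

lemma gR_neg (j : ℤ) : gR ε (-j) = gL ε j := by
  unfold gR gL
  rcases eq_or_ne j 0 with h | h
  · simp [h]
  · have h' : -j ≠ 0 := by omega
    simp only [h, h', if_false]
    push_cast
    rw [div_neg]
    ring

lemma gL_neg (j : ℤ) : gL ε (-j) = gR ε j := by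
  have := gR_neg hε (-j); rw [neg_neg] at this; rw [← this]

end basic

/-- The (unnormalized, reversible) invariant measure on ℕ. -/
noncomputable def nu (ε : ℝ) : ℕ → ℝ
  | 0 => 1
  | k + 1 => nu ε k * gR ε k / gL ε (k + 1)

section nu
variable {ε : ℝ} (hε : ε ∈ Set.Ioo (1 / 2 : ℝ) 1)
include hε

lemma nu_pos (k : ℕ) : 0 < nu ε k := by
  induction k with
  | zero => norm_num [nu]
  | succ k ih =>
    unfold nu
    exact div_pos (mul_pos ih (gR_pos hε (k:ℤ))) (gL_pos hε ((k:ℤ)+1))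

lemma nu_db (k : ℕ) : nu ε k * gR ε k = nu ε (k+1) * gL ε ((k:ℤ)+1) := by
  show nu ε k * gR ε k = nu ε k * gR ε k / gL ε (k + 1) * gL ε ((k:ℤ)+1)
  have h : ((k:ℤ)+1) = ((k+1 : ℕ) : ℤ) := by push_cast; ring
  rw [h, div_mul_cancel₀ _ (ne_of_gt (gL_pos hε (((k+1:ℕ)):ℤ)))]

lemma gR_le_gL_succ' {j : ℤ} (hj : 0 ≤ j) : gR ε j ≤ gL ε (j+1) := by
  have h0 := eps_pos hε
  have hj1 : j + 1 ≠ 0 := by omega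
  have hj1' : (0:ℝ) < ((j+1 : ℤ):ℝ) := by exact_mod_cast (by omega : (0:ℤ) < j+1)
  have hpos : 0 ≤ ε / ((j+1 : ℤ):ℝ) := by positivity
  unfold gR gL
  split_ifs with h
  · linarith
  · have hjpos : (0:ℝ) < (j:ℝ) := by exact_mod_cast (by omega : (0:ℤ) < j)
    have : 0 ≤ ε / (j:ℝ) := by positivity
    linarith

lemma gR_le_gL_succ (k : ℕ) : gR ε (k:ℤ) ≤ gL ε ((k:ℤ)+1) :=
  gR_le_gL_succ' hε (by omega)

lemma nu_antitone_succ (k : ℕ) : nu ε (k+1) ≤ nu ε k := by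
  show nu ε k * gR ε k / gL ε (k + 1) ≤ nu ε k
  rw [div_le_iff₀ (gL_pos hε _)]
  have h2 := gR_le_gL_succ hε k
  push_cast at h2 ⊢
  nlinarith [nu_pos hε k]

lemma nu_antitone : Antitone (nu ε) := by
  apply antitone_nat_of_succ_le
  intro n
  exact nu_antitone_succ hε n

lemma nu_le_one (k : ℕ) : nu ε k ≤ 1 := by
  have := nu_antitone hε (Nat.zero_le k)
  simpa [nu] using this

end nu


/-- Reversible measure on ℤ. -/
noncomputable def mu (ε : ℝ) (j : ℤ) : ℝ := nu ε j.natAbs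

section mu
variable {ε : ℝ} (hε : ε ∈ Set.Ioo (1 / 2 : ℝ) 1)
include hε

lemma mu_pos (j : ℤ) : 0 < mu ε j := nu_pos hε _
lemma mu_le_one (j : ℤ) : mu ε j ≤ 1 := nu_le_one hε _
lemma mu_zero : mu ε 0 = 1 := by simp [mu, nu]

/-- Detailed balance on ℤ. -/
lemma mu_db (j : ℤ) : mu ε j * gR ε j = mu ε (j+1) * gL ε (j+1) := by
  rcases le_or_gt 0 j with hj | hj
  · -- j ≥ 0
    have h1 : j = ((j.natAbs : ℕ) : ℤ) := by omega
    have h2 : (j+1).natAbs = j.natAbs + 1 := by omega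
    unfold mu
    rw [h2]
    calc nu ε j.natAbs * gR ε j = nu ε j.natAbs * gR ε (j.natAbs : ℤ) := by rw [← h1]
    _ = nu ε (j.natAbs+1) * gL ε ((j.natAbs : ℤ)+1) := nu_db hε j.natAbs
    _ = nu ε (j.natAbs+1) * gL ε (j+1) := by rw [← h1]
  · -- j ≤ -1; let m = -j ≥ 1, identity is nu m * gL m = nu (m-1) * gR (m-1)
    have hm : j.natAbs = (j+1).natAbs + 1 := by omega
    have h1 : j = -(((j+1).natAbs + 1 : ℕ) : ℤ) := by omega
    have h2 : j + 1 = -(((j+1).natAbs : ℕ) : ℤ) := by omega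
    set m := (j+1).natAbs with hmdef
    unfold mu
    rw [hm]
    rw [h1]
    have h4 : (-((m+1:ℕ):ℤ) + 1) = -((m:ℕ):ℤ) := by push_cast; ring
    have h5 : ((-((m+1:ℕ):ℤ))).natAbs = m + 1 := by omega
    have h6 : ((-((m:ℕ):ℤ))).natAbs = m := by omega
    rw [h4, h6, gR_neg hε, gL_neg hε]
    have h7 := nu_db hε m
    push_cast at h7 ⊢
    linarith

lemma mu_db' (j : ℤ) : mu ε j * gL ε j = mu ε (j-1) * gR ε (j-1) := by
  have := mu_db hε (j-1)
  rw [sub_add_cancel] at this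
  linarith

end mu

section gPfacts
variable {ε : ℝ} (hε : ε ∈ Set.Ioo (1 / 2 : ℝ) 1)
include hε

lemma gP_nonneg (n : ℕ) (j : ℤ) : 0 ≤ gP ε n j := by
  induction n generalizing j with
  | zero => unfold gP; split_ifs <;> norm_num
  | succ n ih =>
    unfold gP
    have h1 := gR_nonneg hε (j-1)
    have h2 := gL_nonneg hε (j+1)
    nlinarith [ih (j-1), ih (j+1)]

omit hε in
lemma gP_support (n : ℕ) (j : ℤ) (h : n < j.natAbs) : gP ε n j = 0 := by
  induction n generalizing j with
  | zero =>
    unfold gP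
    rw [if_neg (by omega)]
  | succ n ih =>
    unfold gP
    rw [ih (j-1) (by omega), ih (j+1) (by omega)]
    ring

omit hε in
lemma gP_parity (n : ℕ) (j : ℤ) (h : ¬ (2 ∣ (j + n))) : gP ε n j = 0 := by
  induction n generalizing j with
  | zero =>
    unfold gP
    rw [if_neg (by omega)]
  | succ n ih =>
    unfold gP
    push_cast at h
    rw [ih (j-1) (by push_cast; omega), ih (j+1) (by push_cast; omega)]
    ring

/-- Max principle: gP ε n j ≤ mu ε j. -/
lemma gP_le_mu (n : ℕ) (j : ℤ) : gP ε n j ≤ mu ε j := by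
  induction n generalizing j with
  | zero =>
    unfold gP
    split_ifs with h
    · rw [h, mu_zero hε]
    · exact le_of_lt (mu_pos hε j)
  | succ n ih =>
    show gR ε (j-1) * gP ε n (j-1) + gL ε (j+1) * gP ε n (j+1) ≤ mu ε j
    have h1 : gR ε (j-1) * gP ε n (j-1) ≤ gR ε (j-1) * mu ε (j-1) :=
      mul_le_mul_of_nonneg_left (ih (j-1)) (gR_nonneg hε _)
    have h2 : gL ε (j+1) * gP ε n (j+1) ≤ gL ε (j+1) * mu ε (j+1) :=
      mul_le_mul_of_nonneg_left (ih (j+1)) (gL_nonneg hε _)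
    have e1 : gR ε (j-1) * mu ε (j-1) = mu ε j * gL ε j := by
      rw [mu_db' hε j]; ring
    have e2 : gL ε (j+1) * mu ε (j+1) = mu ε j * gR ε j := by
      rw [mu_db hε j]; ring
    have e3 := gRL_sum hε j
    have e4 : mu ε j * gL ε j + mu ε j * gR ε j = mu ε j := by
      rw [← mul_add, add_comm (gL ε j), e3, mul_one]
    linarith

end gPfacts


section sums
variable {ε : ℝ} (hε : ε ∈ Set.Ioo (1 / 2 : ℝ) 1)

lemma sum_Icc_shift (h : ℤ → ℝ) (a b c : ℤ) :
    ∑ j ∈ Finset.Icc (a+c) (b+c), h j = ∑ j ∈ Finset.Icc a b, h (j + c) := by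
  rw [← Finset.map_add_right_Icc, Finset.sum_map]
  rfl

lemma sum_shift_restrict (h : ℤ → ℝ) (n : ℕ) (hsupp : ∀ j : ℤ, n < j.natAbs → h j = 0)
    (c : ℤ) (hc : c = 1 ∨ c = -1) :
    ∑ j ∈ Finset.Icc (-(n:ℤ)-1) ((n:ℤ)+1), h (j + c) = ∑ j ∈ Finset.Icc (-(n:ℤ)) n, h j := by
  have e1 : (-(n:ℤ)-1) + c = -(n:ℤ) - 1 + c := by ring
  rw [← sum_Icc_shift h (-(n:ℤ)-1) ((n:ℤ)+1) c]
  symm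
  apply Finset.sum_subset
  · intro x hx
    simp only [Finset.mem_Icc] at hx ⊢
    omega
  · intro x hx hnx
    simp only [Finset.mem_Icc] at hx hnx
    apply hsupp
    omega

include hε in
/-- Total probability one. -/
lemma gP_total (n : ℕ) : ∑ j ∈ Finset.Icc (-(n:ℤ)) n, gP ε n j = 1 := by
  induction n with
  | zero => simp [gP]
  | succ n ih =>
    have hb1 : -((n+1:ℕ):ℤ) = -(n:ℤ)-1 := by push_cast; ring
    have hb2 : ((n+1:ℕ):ℤ) = (n:ℤ)+1 := by push_cast; ring
    rw [hb1, hb2]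
    have expand : ∀ j : ℤ, gP ε (n+1) j =
        (fun k => gR ε k * gP ε n k) (j + (-1)) + (fun k => gL ε k * gP ε n k) (j + 1) := by
      intro j
      show gP ε (n+1) j = gR ε (j-1) * gP ε n (j-1) + gL ε (j+1) * gP ε n (j+1)
      rfl
    calc ∑ j ∈ Finset.Icc (-(n:ℤ)-1) ((n:ℤ)+1), gP ε (n+1) j
        = ∑ j ∈ Finset.Icc (-(n:ℤ)-1) ((n:ℤ)+1),
            ((fun k => gR ε k * gP ε n k) (j + (-1)) + (fun k => gL ε k * gP ε n k) (j + 1)) := by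
          apply Finset.sum_congr rfl; intro j _; exact expand j
    _ = ∑ j ∈ Finset.Icc (-(n:ℤ)-1) ((n:ℤ)+1), (fun k => gR ε k * gP ε n k) (j + (-1))
        + ∑ j ∈ Finset.Icc (-(n:ℤ)-1) ((n:ℤ)+1), (fun k => gL ε k * gP ε n k) (j + 1) := by
          rw [Finset.sum_add_distrib]
    _ = ∑ j ∈ Finset.Icc (-(n:ℤ)) n, gR ε j * gP ε n j
        + ∑ j ∈ Finset.Icc (-(n:ℤ)) n, gL ε j * gP ε n j := by
          rw [sum_shift_restrict (fun k => gR ε k * gP ε n k) n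
                (fun j hj => by show gR ε j * gP ε n j = 0; rw [gP_support n j hj]; ring) (-1) (Or.inr rfl),
              sum_shift_restrict (fun k => gL ε k * gP ε n k) n
                (fun j hj => by show gL ε j * gP ε n j = 0; rw [gP_support n j hj]; ring) 1 (Or.inl rfl)]
    _ = ∑ j ∈ Finset.Icc (-(n:ℤ)) n, (gR ε j + gL ε j) * gP ε n j := by
          rw [← Finset.sum_add_distrib]; apply Finset.sum_congr rfl; intro j _; ring
    _ = ∑ j ∈ Finset.Icc (-(n:ℤ)) n, gP ε n j := by
          apply Finset.sum_congr rfl; intro j _; rw [gRL_sum hε j, one_mul]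
    _ = 1 := ih

end sums

/-- density wrt mu -/
noncomputable def gg (ε : ℝ) (n : ℕ) (j : ℤ) : ℝ := gP ε n j / mu ε j

/-- L²(mu) norm of the density. -/
noncomputable def aseq (ε : ℝ) (n : ℕ) : ℝ :=
  ∑ j ∈ Finset.Icc (-(n:ℤ)) n, mu ε j * (gg ε n j)^2

/-- Dirichlet deficit. -/
noncomputable def dseq (ε : ℝ) (n : ℕ) : ℝ :=
  ∑ j ∈ Finset.Icc (-(n:ℤ)-1) ((n:ℤ)+1),
    mu ε j * gR ε j * gL ε j * (gg ε n (j+1) - gg ε n (j-1))^2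

section dirichlet
variable {ε : ℝ} (hε : ε ∈ Set.Ioo (1 / 2 : ℝ) 1)
include hε

lemma gg_nonneg (n : ℕ) (j : ℤ) : 0 ≤ gg ε n j :=
  div_nonneg (gP_nonneg hε n j) (le_of_lt (mu_pos hε j))

lemma gg_le_one (n : ℕ) (j : ℤ) : gg ε n j ≤ 1 := by
  rw [gg, div_le_one (mu_pos hε j)]
  exact gP_le_mu hε n j

lemma gg_support (n : ℕ) (j : ℤ) (h : n < j.natAbs) : gg ε n j = 0 := by
  rw [gg, gP_support n j h, zero_div]

lemma gP_eq_mu_gg (n : ℕ) (j : ℤ) : gP ε n j = mu ε j * gg ε n j := by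
  rw [gg, mul_div_cancel₀]
  exact ne_of_gt (mu_pos hε j)

lemma gg_succ (n : ℕ) (j : ℤ) :
    gg ε (n+1) j = gL ε j * gg ε n (j-1) + gR ε j * gg ε n (j+1) := by
  have key : gP ε (n+1) j = mu ε j * (gL ε j * gg ε n (j-1) + gR ε j * gg ε n (j+1)) := by
    show gR ε (j-1) * gP ε n (j-1) + gL ε (j+1) * gP ε n (j+1) = _
    rw [gP_eq_mu_gg hε n (j-1), gP_eq_mu_gg hε n (j+1)]
    have e1 : gR ε (j-1) * mu ε (j-1) = mu ε j * gL ε j := by rw [mu_db' hε j]; ring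
    have e2 : gL ε (j+1) * mu ε (j+1) = mu ε j * gR ε j := by rw [mu_db hε j]; ring
    linear_combination gg ε n (j-1) * e1 + gg ε n (j+1) * e2
  rw [gg, key, mul_div_cancel_left₀ _ (ne_of_gt (mu_pos hε j))]

/-- The fundamental energy identity. -/
lemma aseq_succ (n : ℕ) : aseq ε (n+1) + dseq ε n = aseq ε n := by
  have hb1 : -((n+1:ℕ):ℤ) = -(n:ℤ)-1 := by push_cast; ring
  have hb2 : ((n+1:ℕ):ℤ) = (n:ℤ)+1 := by push_cast; ring
  have pointwise : ∀ j : ℤ, mu ε j * (gg ε (n+1) j)^2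
      = (fun k => mu ε k * gR ε k * (gg ε n k)^2) (j + (-1))
      + (fun k => mu ε k * gL ε k * (gg ε n k)^2) (j + 1)
      - mu ε j * gR ε j * gL ε j * (gg ε n (j+1) - gg ε n (j-1))^2 := by
    intro j
    simp only
    rw [gg_succ hε n j]
    have e1 : mu ε (j + (-1)) * gR ε (j + (-1)) = mu ε j * gL ε j := by
      rw [show j + (-1) = j - 1 by ring, mu_db' hε j]
    have e2 : mu ε (j + 1) * gL ε (j + 1) = mu ε j * gR ε j := by
      rw [mu_db hε j]
    have e3 := gRL_sum hε j
    rw [show j + (-1) = j - 1 by ring] at e1 ⊢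
    linear_combination (-(gg ε n (j-1))^2) * e1 + (-(gg ε n (j+1))^2) * e2
      + (mu ε j * (gL ε j * (gg ε n (j-1))^2 + gR ε j * (gg ε n (j+1))^2)) * e3
  rw [aseq, aseq, dseq, hb1, hb2]
  rw [show ∑ j ∈ Finset.Icc (-(n:ℤ)-1) ((n:ℤ)+1), mu ε j * (gg ε (n+1) j)^2
      = ∑ j ∈ Finset.Icc (-(n:ℤ)-1) ((n:ℤ)+1),
          ((fun k => mu ε k * gR ε k * (gg ε n k)^2) (j + (-1))
           + (fun k => mu ε k * gL ε k * (gg ε n k)^2) (j + 1)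
           - mu ε j * gR ε j * gL ε j * (gg ε n (j+1) - gg ε n (j-1))^2)
      from Finset.sum_congr rfl (fun j _ => pointwise j)]
  rw [Finset.sum_sub_distrib, Finset.sum_add_distrib]
  rw [sum_shift_restrict (fun k => mu ε k * gR ε k * (gg ε n k)^2) n
        (fun j hj => by show mu ε j * gR ε j * (gg ε n j)^2 = 0; rw [gg_support hε n j hj]; ring) (-1) (Or.inr rfl),
      sum_shift_restrict (fun k => mu ε k * gL ε k * (gg ε n k)^2) n
        (fun j hj => by show mu ε j * gL ε j * (gg ε n j)^2 = 0; rw [gg_support hε n j hj]; ring) 1 (Or.inl rfl)]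
  have : ∑ j ∈ Finset.Icc (-(n:ℤ)) n, mu ε j * gR ε j * (gg ε n j)^2
       + ∑ j ∈ Finset.Icc (-(n:ℤ)) n, mu ε j * gL ε j * (gg ε n j)^2
       = ∑ j ∈ Finset.Icc (-(n:ℤ)) n, mu ε j * (gg ε n j)^2 := by
    rw [← Finset.sum_add_distrib]
    apply Finset.sum_congr rfl
    intro j _
    have e3 := gRL_sum hε j
    linear_combination (gg ε n j)^2 * mu ε j * e3
  linarith [this]

lemma dseq_nonneg (n : ℕ) : 0 ≤ dseq ε n := by
  apply Finset.sum_nonneg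
  intro j _
  have := mu_pos hε j
  have := gR_nonneg hε j
  have := gL_nonneg hε j
  positivity

lemma aseq_nonneg (n : ℕ) : 0 ≤ aseq ε n := by
  apply Finset.sum_nonneg
  intro j _
  have := mu_pos hε j
  positivity

lemma aseq_antitone : Antitone (aseq ε) := by
  apply antitone_nat_of_succ_le
  intro n
  have := aseq_succ hε n
  have := dseq_nonneg hε n
  linarith

end dirichlet


/-- Telescoping antiderivative of nu. -/
noncomputable def Bb (ε : ℝ) (k : ℕ) : ℝ :=
  nu ε k * ((k:ℝ)/(2*ε-1) + 1/2 - ε/(2*(2*ε-1)*(k:ℝ)))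

noncomputable def bet (ε : ℝ) (k : ℕ) : ℝ := nu ε k * gL ε (k:ℤ)

section tele
variable {ε : ℝ} (hε : ε ∈ Set.Ioo (1 / 2 : ℝ) 1)
include hε

lemma twoeps : (0:ℝ) < 2*ε - 1 := by have := hε.1; linarith

lemma nu_one : nu ε 1 = 1/(1+ε) := by
  have h0 := eps_pos hε
  show nu ε 0 * gR ε (0:ℤ) / gL ε ((0:ℤ)+1) = 1/(1+ε)
  have h1 : gR ε (0:ℤ) = 1/2 := by unfold gR; simp
  have h2 : gL ε ((0:ℤ)+1) = (1+ε)/2 := by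
    unfold gL
    rw [if_neg (by omega : (0:ℤ)+1 ≠ 0)]
    norm_num
  rw [nu, h1, h2]
  field_simp

lemma gL_val (k : ℕ) (hk : 1 ≤ k) : gL ε (k:ℤ) = (1 + ε/(k:ℝ))/2 := by
  unfold gL
  rw [if_neg (by omega : (k:ℤ) ≠ 0)]
  norm_num

lemma gR_val (k : ℕ) (hk : 1 ≤ k) : gR ε (k:ℤ) = (1 - ε/(k:ℝ))/2 := by
  unfold gR
  rw [if_neg (by omega : (k:ℤ) ≠ 0)]
  norm_num

lemma nu_succ_formula (k : ℕ) (hk : 1 ≤ k) :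
    nu ε (k+1) = nu ε k * (((k:ℝ)-ε)*((k:ℝ)+1)) / ((k:ℝ)*((k:ℝ)+1+ε)) := by
  have h0 := eps_pos hε
  have hkpos : (0:ℝ) < (k:ℝ) := by exact_mod_cast hk
  have hk1pos : (0:ℝ) < (k:ℝ)+1 := by linarith
  show nu ε k * gR ε (k:ℤ) / gL ε ((k:ℤ)+1) = _
  have hcast : ((k:ℤ)+1) = ((k+1:ℕ):ℤ) := by push_cast; ring
  rw [hcast, gR_val hε k hk, gL_val hε (k+1) (by omega)]
  have hck : ((k+1:ℕ):ℝ) = (k:ℝ)+1 := by push_cast; ring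
  rw [hck]
  have hd : (1 + ε/((k:ℝ)+1))/2 ≠ 0 := by positivity
  field_simp

lemma tele (k : ℕ) (hk : 1 ≤ k) : Bb ε k - Bb ε (k+1) = nu ε k := by
  have h0 := eps_pos hε
  have h2e := twoeps hε
  have hkpos : (0:ℝ) < (k:ℝ) := by exact_mod_cast hk
  have hk1pos : (0:ℝ) < (k:ℝ)+1 := by linarith
  have hden : (0:ℝ) < (k:ℝ)+1+ε := by linarith
  unfold Bb
  rw [nu_succ_formula hε k hk]
  have hck : ((k+1:ℕ):ℝ) = (k:ℝ)+1 := by push_cast; ring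
  rw [hck]
  field_simp
  ring

lemma Bb_one : Bb ε 1 = 1/(2*(2*ε-1)) := by
  have h0 := eps_pos hε
  have h2e := twoeps hε
  have h1e : (0:ℝ) < 1 + ε := by linarith
  unfold Bb
  rw [nu_one hε]
  push_cast
  have hne : 2*ε-1 ≠ 0 := ne_of_gt h2e
  have hne2 : 1+ε ≠ 0 := ne_of_gt h1e
  have hx : (2*ε-1) * (2*ε-1)⁻¹ = 1 := mul_inv_cancel₀ hne
  have hy : (1+ε) * (1+ε)⁻¹ = 1 := mul_inv_cancel₀ hne2
  simp only [mul_one, ← div_div]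
  linear_combination (-(1+ε)⁻¹/2) * hx + ((2*ε-1)⁻¹/2) * hy

lemma Bb_nonneg (k : ℕ) (hk : 1 ≤ k) : 0 ≤ Bb ε k := by
  have h0 := eps_pos hε
  have h2e := twoeps hε
  have hkpos : (0:ℝ) < (k:ℝ) := by exact_mod_cast hk
  have hk1 : (1:ℝ) ≤ (k:ℝ) := by exact_mod_cast hk
  unfold Bb
  apply mul_nonneg (le_of_lt (nu_pos hε k))
  have h1 : ε/(2*(2*ε-1)*(k:ℝ)) ≤ 1/(2*(2*ε-1)) := by
    rw [div_le_div_iff₀ (by positivity) (by positivity)]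
    nlinarith [hε.2]
  have h2 : 1/(2*(2*ε-1)) ≤ (k:ℝ)/(2*ε-1) := by
    rw [div_le_div_iff₀ (by positivity) (by positivity)]
    nlinarith
  linarith

lemma Vsum (m : ℕ) : ∑ k ∈ Finset.Icc 1 m, nu ε k = Bb ε 1 - Bb ε (m+1) := by
  induction m with
  | zero => simp
  | succ m ih =>
    rw [Finset.sum_Icc_succ_top (by omega : 1 ≤ m+1), ih, ← tele hε (m+1) (by omega)]
    ring

lemma nu_eq_bet (k : ℕ) : nu ε k = bet ε k + bet ε (k+1) := by
  have hdb := nu_db hε k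
  have hcast : ((k+1:ℕ):ℤ) = (k:ℤ)+1 := by push_cast; ring
  unfold bet
  rw [hcast, ← hdb]
  have := gRL_sum hε (k:ℤ)
  linear_combination (-(nu ε k)) * this

lemma bet_one : bet ε 1 = 1/2 := by
  have h0 := eps_pos hε
  have h1e : (0:ℝ) < 1 + ε := by linarith
  unfold bet
  rw [nu_one hε, gL_val hε 1 le_rfl]
  push_cast
  field_simp

lemma bet_nonneg (k : ℕ) : 0 ≤ bet ε k :=
  mul_nonneg (le_of_lt (nu_pos hε k)) (gL_nonneg hε _)

lemma gL_le_one (j : ℤ) : gL ε j ≤ 1 := by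
  have h0 := eps_pos hε
  unfold gL
  split_ifs with h
  · norm_num
  · have := absdiv_le hε h
    have : ε / (j:ℝ) ≤ ε := le_trans (le_abs_self _) this
    have := hε.2
    linarith

lemma bet_le_nu (k : ℕ) : bet ε k ≤ nu ε k := by
  have := gL_le_one hε (k:ℤ)
  have := nu_pos hε k
  unfold bet
  nlinarith

lemma Gsum (m : ℕ) :
    2 * ∑ k ∈ Finset.Icc 1 m, bet ε k = (∑ k ∈ Finset.Icc 1 m, nu ε k) + bet ε 1 - bet ε (m+1) := by
  induction m with
  | zero => simp
  | succ m ih =>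
    rw [Finset.sum_Icc_succ_top (by omega : 1 ≤ m+1), Finset.sum_Icc_succ_top (by omega : 1 ≤ m+1)]
    have := nu_eq_bet hε (m+1)
    linarith

lemma evensum (K : ℕ) :
    ∑ i ∈ Finset.Icc 1 K, nu ε (2*i) = ∑ k ∈ Finset.Icc 2 (2*K+1), bet ε k := by
  induction K with
  | zero => simp
  | succ K ih =>
    rw [Finset.sum_Icc_succ_top (by omega : 1 ≤ K+1), ih]
    rw [show 2*(K+1)+1 = (2*K+2)+1 from by ring]
    rw [Finset.sum_Icc_succ_top (by omega : 2 ≤ (2*K+2)+1)]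
    rw [show 2*K+2 = (2*K+1)+1 from by ring]
    rw [Finset.sum_Icc_succ_top (by omega : 2 ≤ (2*K+1)+1)]
    have h := nu_eq_bet hε (2*K+2)
    rw [show 2*(K+1) = (2*K+1)+1 from by ring]
    rw [show (2*K+1)+1+1 = 2*K+2+1 from by ring]
    rw [show (2*K+1)+1 = 2*K+2 from by ring] at h ⊢
    linarith

end tele


section decay
variable {ε : ℝ} (hε : ε ∈ Set.Ioo (1 / 2 : ℝ) 1)
include hε

lemma knu_step (k : ℕ) (hk : 1 ≤ k) :
    ((k:ℝ)+1) * nu ε (k+1) ≤ (k:ℝ) * nu ε k * (1 - (ε - 1/2)/(k:ℝ)) := by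
  have h0 := eps_pos hε
  have h1 := hε.1
  have h2 := hε.2
  have hkpos : (0:ℝ) < (k:ℝ) := by exact_mod_cast hk
  have hk1 : (1:ℝ) ≤ (k:ℝ) := by exact_mod_cast hk
  have hnp := nu_pos hε k
  have e : nu ε (k+1) * ((k:ℝ)*((k:ℝ)+1+ε)) = nu ε k * (((k:ℝ)-ε)*((k:ℝ)+1)) := by
    rw [nu_succ_formula hε k hk]
    field_simp
  have key2 : ((k:ℝ)+1)*(((k:ℝ)-ε)*((k:ℝ)+1)) ≤ ((k:ℝ)-(ε-1/2))*((k:ℝ)*((k:ℝ)+1+ε)) := by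
    nlinarith [mul_nonneg (by linarith : (0:ℝ) ≤ ε-1/2) (mul_nonneg hkpos.le hkpos.le),
      mul_nonneg (mul_nonneg (by linarith : (0:ℝ) ≤ ε-1/2) (by linarith : (0:ℝ) ≤ 1-ε)) hkpos.le]
  have hden : (0:ℝ) < (k:ℝ)*((k:ℝ)+1+ε) := by positivity
  rw [← mul_le_mul_iff_of_pos_right hden]
  have lhs_eq : ((k:ℝ)+1) * nu ε (k+1) * ((k:ℝ)*((k:ℝ)+1+ε))
      = nu ε k * (((k:ℝ)+1)*(((k:ℝ)-ε)*((k:ℝ)+1))) := by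
    linear_combination ((k:ℝ)+1) * e
  have rhs_eq : (k:ℝ) * nu ε k * (1 - (ε - 1/2)/(k:ℝ)) * ((k:ℝ)*((k:ℝ)+1+ε))
      = nu ε k * (((k:ℝ)-(ε-1/2))*((k:ℝ)*((k:ℝ)+1+ε))) := by
    field_simp
  rw [lhs_eq, rhs_eq]
  exact mul_le_mul_of_nonneg_left key2 (le_of_lt hnp)

lemma rpow_bound (k : ℕ) (hk : 2 ≤ k) :
    (1 - (ε - 1/2)/(k:ℝ)) ≤ (((k:ℝ)-1)/(k:ℝ)) ^ ((ε - 1/2)/2 : ℝ) := by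
  have h1 := hε.1
  have h2 := hε.2
  set t : ℝ := ε - 1/2 with ht
  have htpos : 0 < t := by rw [ht]; linarith
  have hthalf : t < 1/2 := by rw [ht]; linarith
  have hk2 : (2:ℝ) ≤ (k:ℝ) := by exact_mod_cast hk
  have hkpos : (0:ℝ) < (k:ℝ) := by linarith
  have hz0 : 0 ≤ 1 - t/(k:ℝ) := by
    have : t/(k:ℝ) ≤ t/2 := by
      apply div_le_div_of_nonneg_left (le_of_lt htpos) (by norm_num) hk2
    linarith
  have hy0 : (0:ℝ) ≤ ((k:ℝ)-1)/(k:ℝ) := by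
    apply div_nonneg (by linarith) (by linarith)
  -- step 1 : 1 - t/k ≤ exp(-(t/k))
  have step1 : 1 - t/(k:ℝ) ≤ Real.exp (-(t/(k:ℝ))) := by
    have := Real.add_one_le_exp (-(t/(k:ℝ)))
    linarith
  -- step 2,3 : (1-t/k)^(2/t) ≤ exp(-(2/k))
  have step23 : (1 - t/(k:ℝ)) ^ ((2:ℝ)/t) ≤ Real.exp (-(2/(k:ℝ))) := by
    have h23 : Real.exp (-(t/(k:ℝ))) ^ ((2:ℝ)/t) = Real.exp (-(2/(k:ℝ))) := by
      rw [← Real.exp_mul]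
      congr 1
      field_simp
    calc (1 - t/(k:ℝ)) ^ ((2:ℝ)/t) ≤ Real.exp (-(t/(k:ℝ))) ^ ((2:ℝ)/t) :=
          Real.rpow_le_rpow hz0 step1 (by positivity)
    _ = Real.exp (-(2/(k:ℝ))) := h23
  -- step 4 : exp(-(2/k)) ≤ (k-1)/k
  have step4 : Real.exp (-(2/(k:ℝ))) ≤ ((k:ℝ)-1)/(k:ℝ) := by
    have hexp : 1 + 2/(k:ℝ) ≤ Real.exp (2/(k:ℝ)) := by
      have := Real.add_one_le_exp (2/(k:ℝ))
      linarith
    have hp : (0:ℝ) < 1 + 2/(k:ℝ) := by positivity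
    have hinv : (Real.exp (2/(k:ℝ)))⁻¹ ≤ (1 + 2/(k:ℝ))⁻¹ := by
      apply inv_anti₀ hp hexp
    have hlast : ((1:ℝ) + 2/(k:ℝ))⁻¹ ≤ ((k:ℝ)-1)/(k:ℝ) := by
      rw [inv_eq_one_div, div_le_div_iff₀ hp hkpos]
      have h2k : 2/(k:ℝ) ≤ 1 := by
        rw [div_le_one hkpos]; linarith
      have expand : ((k:ℝ)-1) * (1 + 2/(k:ℝ)) = (k:ℝ) + 1 - 2/(k:ℝ) := by
        field_simp
        ring
      rw [expand]
      linarith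
    rw [Real.exp_neg]
    exact le_trans hinv hlast
  -- combine
  have hfinal : ((1 - t/(k:ℝ)) ^ ((2:ℝ)/t)) ^ (t/2 : ℝ) ≤ (((k:ℝ)-1)/(k:ℝ)) ^ (t/2 : ℝ) :=
    Real.rpow_le_rpow (Real.rpow_nonneg hz0 _) (le_trans step23 step4) (by positivity)
  have hid : ((1 - t/(k:ℝ)) ^ ((2:ℝ)/t)) ^ (t/2 : ℝ) = 1 - t/(k:ℝ) := by
    rw [← Real.rpow_mul hz0]
    rw [show (2:ℝ)/t * (t/2) = 1 from by field_simp]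
    exact Real.rpow_one _
  rw [← hid]
  exact hfinal

end decay


section decay2
variable {ε : ℝ} (hε : ε ∈ Set.Ioo (1 / 2 : ℝ) 1)
include hε

lemma M_mono (k : ℕ) (hk : 2 ≤ k) :
    ((k:ℝ)+1) * nu ε (k+1) * ((k:ℝ))^((ε-1/2)/2 : ℝ)
      ≤ (k:ℝ) * nu ε k * ((k:ℝ)-1)^((ε-1/2)/2 : ℝ) := by
  have hkpos : (0:ℝ) < (k:ℝ) := by positivity
  have hk2 : (2:ℝ) ≤ (k:ℝ) := by exact_mod_cast hk
  have hnp := nu_pos hε k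
  have hs : (0:ℝ) ≤ ((k:ℝ))^((ε-1/2)/2 : ℝ) := Real.rpow_nonneg (by linarith) _
  have step1 : ((k:ℝ)+1) * nu ε (k+1) * ((k:ℝ))^((ε-1/2)/2 : ℝ)
      ≤ ((k:ℝ) * nu ε k * (1 - (ε - 1/2)/(k:ℝ))) * ((k:ℝ))^((ε-1/2)/2 : ℝ) :=
    mul_le_mul_of_nonneg_right (knu_step hε k (by omega)) hs
  have step2 : ((k:ℝ) * nu ε k * (1 - (ε - 1/2)/(k:ℝ))) * ((k:ℝ))^((ε-1/2)/2 : ℝ)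
      ≤ ((k:ℝ) * nu ε k) * ((((k:ℝ)-1)/(k:ℝ))^((ε-1/2)/2 : ℝ) * ((k:ℝ))^((ε-1/2)/2 : ℝ)) := by
    have hb := rpow_bound hε k hk
    have hmul : (1 - (ε - 1/2)/(k:ℝ)) * ((k:ℝ))^((ε-1/2)/2 : ℝ)
        ≤ (((k:ℝ)-1)/(k:ℝ))^((ε-1/2)/2 : ℝ) * ((k:ℝ))^((ε-1/2)/2 : ℝ) :=
      mul_le_mul_of_nonneg_right hb hs
    have hkn : (0:ℝ) ≤ (k:ℝ) * nu ε k := by positivity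
    calc ((k:ℝ) * nu ε k * (1 - (ε - 1/2)/(k:ℝ))) * ((k:ℝ))^((ε-1/2)/2 : ℝ)
        = ((k:ℝ) * nu ε k) * ((1 - (ε - 1/2)/(k:ℝ)) * ((k:ℝ))^((ε-1/2)/2 : ℝ)) := by ring
    _ ≤ ((k:ℝ) * nu ε k) * ((((k:ℝ)-1)/(k:ℝ))^((ε-1/2)/2 : ℝ) * ((k:ℝ))^((ε-1/2)/2 : ℝ)) :=
        mul_le_mul_of_nonneg_left hmul hkn
  have step3 : (((k:ℝ)-1)/(k:ℝ))^((ε-1/2)/2 : ℝ) * ((k:ℝ))^((ε-1/2)/2 : ℝ)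
      = ((k:ℝ)-1)^((ε-1/2)/2 : ℝ) := by
    rw [← Real.mul_rpow (by apply div_nonneg <;> linarith) (by linarith)]
    rw [div_mul_cancel₀ _ (ne_of_gt hkpos)]
  calc ((k:ℝ)+1) * nu ε (k+1) * ((k:ℝ))^((ε-1/2)/2 : ℝ)
      ≤ ((k:ℝ) * nu ε k * (1 - (ε - 1/2)/(k:ℝ))) * ((k:ℝ))^((ε-1/2)/2 : ℝ) := step1
  _ ≤ ((k:ℝ) * nu ε k) * ((((k:ℝ)-1)/(k:ℝ))^((ε-1/2)/2 : ℝ) * ((k:ℝ))^((ε-1/2)/2 : ℝ)) := step2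
  _ = (k:ℝ) * nu ε k * ((k:ℝ)-1)^((ε-1/2)/2 : ℝ) := by rw [step3]

lemma M_le (k : ℕ) (hk : 2 ≤ k) :
    (k:ℝ) * nu ε k * ((k:ℝ)-1)^((ε-1/2)/2 : ℝ) ≤ 2 * nu ε 2 := by
  induction k, hk using Nat.le_induction with
  | base =>
    norm_num
  | succ k hk ih =>
    have := M_mono hε k hk
    have hcast : ((k+1:ℕ):ℝ) = (k:ℝ)+1 := by push_cast; ring
    rw [hcast, show (k:ℝ)+1-1 = (k:ℝ) from by ring]
    exact le_trans this ih

lemma knu_le (k : ℕ) (hk : 2 ≤ k) :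
    (k:ℝ) * nu ε k ≤ (2 * nu ε 2) * ((k:ℝ)-1)^(-((ε-1/2)/2) : ℝ) := by
  have hk2 : (2:ℝ) ≤ (k:ℝ) := by exact_mod_cast hk
  have hpos : (0:ℝ) < ((k:ℝ)-1)^((ε-1/2)/2 : ℝ) := Real.rpow_pos_of_pos (by linarith) _
  have h := M_le hε k hk
  rw [Real.rpow_neg (by linarith), ← div_eq_mul_inv, le_div_iff₀ hpos]
  linarith

lemma knu_tendsto : Tendsto (fun k : ℕ => (k:ℝ) * nu ε k) atTop (nhds 0) := by
  have h1 : Tendsto (fun k : ℕ => (k:ℝ) - 1) atTop atTop :=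
    tendsto_atTop_add_const_right _ (-1) tendsto_natCast_atTop_atTop
  have hspos : (0:ℝ) < (ε-1/2)/2 := by have := hε.1; linarith
  have h2 : Tendsto (fun k : ℕ => ((k:ℝ)-1)^(-((ε-1/2)/2) : ℝ)) atTop (nhds 0) :=
    (tendsto_rpow_neg_atTop hspos).comp h1
  have h3 : Tendsto (fun k : ℕ => (2 * nu ε 2) * ((k:ℝ)-1)^(-((ε-1/2)/2) : ℝ)) atTop (nhds 0) := by
    have := h2.const_mul (2 * nu ε 2)
    simpa using this
  apply squeeze_zero' (Filter.Eventually.of_forall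
    (fun k => mul_nonneg (Nat.cast_nonneg k) (nu_pos hε k).le)) _ h3
  filter_upwards [Filter.eventually_ge_atTop 2] with k hk
  exact knu_le hε k hk

lemma nu_tendsto : Tendsto (nu ε) atTop (nhds 0) := by
  apply squeeze_zero' (Filter.Eventually.of_forall (fun k => (nu_pos hε k).le))
    _ (knu_tendsto hε)
  filter_upwards [Filter.eventually_ge_atTop 1] with k hk
  have hk1 : (1:ℝ) ≤ (k:ℝ) := by exact_mod_cast hk
  nlinarith [nu_pos hε k]

lemma Bb_tendsto : Tendsto (Bb ε) atTop (nhds 0) := by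
  have h2e := twoeps hε
  have h0 := eps_pos hε
  have hC : Tendsto (fun k : ℕ => ((k:ℝ) * nu ε k) * (1/(2*ε-1) + 1/2)) atTop (nhds 0) := by
    have := (knu_tendsto hε).mul_const (1/(2*ε-1) + 1/2)
    simpa using this
  apply squeeze_zero' _ _ hC
  · filter_upwards [Filter.eventually_ge_atTop 1] with k hk
    exact Bb_nonneg hε k hk
  · filter_upwards [Filter.eventually_ge_atTop 1] with k hk
    have hk1 : (1:ℝ) ≤ (k:ℝ) := by exact_mod_cast hk
    have hnp := nu_pos hε k
    unfold Bb
    have hb1 : ε/(2*(2*ε-1)*(k:ℝ)) ≥ 0 := by positivity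
    have hb2 : (k:ℝ)/(2*ε-1) + 1/2 - ε/(2*(2*ε-1)*(k:ℝ)) ≤ (k:ℝ)*(1/(2*ε-1) + 1/2) := by
      have : (k:ℝ)/(2*ε-1) + (k:ℝ)/2 = (k:ℝ)*(1/(2*ε-1)+1/2) := by ring
      nlinarith
    nlinarith

lemma bet_tendsto : Tendsto (bet ε) atTop (nhds 0) := by
  apply squeeze_zero' (Filter.Eventually.of_forall (fun k => bet_nonneg hε k))
    (Filter.Eventually.of_forall (fun k => bet_le_nu hε k)) (nu_tendsto hε)

end decay2


/-- even sites within [-2K, 2K] -/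
noncomputable def Sev (K : ℕ) : Finset ℤ := (Finset.Icc (-(K:ℤ)) K).image (fun i => 2*i)

noncomputable def Wc (ε : ℝ) : ℝ := 1/2 + Bb ε 1

noncomputable def delt (ε : ℝ) (K : ℕ) : ℝ := Bb ε (2*K+2) + bet ε (2*K+2)

section classsums
variable {ε : ℝ} (hε : ε ∈ Set.Ioo (1 / 2 : ℝ) 1)

lemma mu_neg (j : ℤ) : mu ε (-j) = mu ε j := by simp [mu]

lemma sum_sym (f : ℤ → ℝ) (hf : ∀ i : ℤ, f (-i) = f i) (K : ℕ) :
    ∑ i ∈ Finset.Icc (-(K:ℤ)) K, f i = f 0 + 2 * ∑ i ∈ Finset.Icc 1 K, f (i:ℤ) := by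
  induction K with
  | zero => simp
  | succ K ih =>
    have hb1 : -((K+1:ℕ):ℤ) = -(K:ℤ)-1 := by push_cast; ring
    have hb2 : ((K+1:ℕ):ℤ) = (K:ℤ)+1 := by push_cast; ring
    rw [hb1, hb2]
    have hins : Finset.Icc (-(K:ℤ)-1) ((K:ℤ)+1)
        = insert (-(K:ℤ)-1) (insert ((K:ℤ)+1) (Finset.Icc (-(K:ℤ)) K)) := by
      ext x
      simp only [Finset.mem_Icc, Finset.mem_insert]
      omega
    rw [hins, Finset.sum_insert (by simp only [Finset.mem_Icc, Finset.mem_insert]; omega),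
        Finset.sum_insert (by simp only [Finset.mem_Icc]; omega), ih,
        Finset.sum_Icc_succ_top (by omega : 1 ≤ K+1)]
    have h1 : f (-(K:ℤ)-1) = f ((K:ℤ)+1) := by
      rw [show -(K:ℤ)-1 = -((K:ℤ)+1) from by ring, hf]
    have h2 : f (((K+1:ℕ):ℤ)) = f ((K:ℤ)+1) := by rw [hb2]
    rw [h1, h2]
    ring

lemma Sev_mem (j : ℤ) (K : ℕ) : j ∈ Sev K ↔ 2 ∣ j ∧ j.natAbs ≤ 2*K := by
  unfold Sev
  simp only [Finset.mem_image, Finset.mem_Icc]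
  constructor
  · rintro ⟨i, hi, rfl⟩
    constructor
    · exact ⟨i, rfl⟩
    · omega
  · rintro ⟨⟨c, hc⟩, h⟩
    exact ⟨c, by omega, hc.symm⟩

lemma sum_Sev (F : ℤ → ℝ) (K : ℕ) :
    ∑ j ∈ Sev K, F j = ∑ i ∈ Finset.Icc (-(K:ℤ)) K, F (2*i) :=
  Finset.sum_image (by intro a _ b _ h; exact mul_left_cancel₀ (by norm_num) h)

include hε in
lemma sum_mu_Sev (K : ℕ) : ∑ j ∈ Sev K, mu ε j = Wc ε - delt ε K := by
  rw [sum_Sev]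
  rw [sum_sym (fun i => mu ε (2*i)) (fun i => by
    show mu ε (2 * -i) = mu ε (2*i)
    rw [show 2*(-i) = -(2*i) from by ring, mu_neg]) K]
  have hmu0 : mu ε (2*(0:ℤ)) = 1 := by norm_num [mu, nu]
  have hcast : ∀ i : ℕ, mu ε (2*(i:ℤ)) = nu ε (2*i) := by
    intro i
    unfold mu
    have h : (2*(i:ℤ)).natAbs = 2*i := by omega
    rw [h]
  have hsum : ∑ i ∈ Finset.Icc 1 K, mu ε (2*(i:ℤ)) = ∑ i ∈ Finset.Icc 1 K, nu ε (2*i) :=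
    Finset.sum_congr rfl (fun i _ => hcast i)
  rw [hmu0, hsum, evensum hε K]
  -- now relate Icc 2 (2K+1) to Icc 1 (2K+1)
  have hsplit : ∑ k ∈ Finset.Icc 1 (2*K+1), bet ε k
      = bet ε 1 + ∑ k ∈ Finset.Icc 2 (2*K+1), bet ε k := by
    have : Finset.Icc 1 (2*K+1) = insert 1 (Finset.Icc 2 (2*K+1)) := by
      ext x
      simp only [Finset.mem_Icc, Finset.mem_insert]
      omega
    rw [this, Finset.sum_insert (by simp only [Finset.mem_Icc]; omega)]
  have hG := Gsum hε (2*K+1)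
  have hV := Vsum hε (2*K+1)
  have hb1 := bet_one hε
  unfold Wc delt
  rw [show 2*K+1+1 = 2*K+2 from by ring] at hG hV
  linarith

include hε in
lemma delt_nonneg (K : ℕ) : 0 ≤ delt ε K :=
  add_nonneg (Bb_nonneg hε _ (by omega)) (bet_nonneg hε _)

include hε in
lemma delt_tendsto : Tendsto (delt ε) atTop (nhds 0) := by
  have hcomp : Tendsto (fun K : ℕ => 2*K+2) atTop atTop := by
    apply Filter.tendsto_atTop_mono (f := fun K : ℕ => K)
      (fun K => by beta_reduce; omega)
    exact Filter.tendsto_id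
  have h1 := (Bb_tendsto hε).comp hcomp
  have h2 := (bet_tendsto hε).comp hcomp
  have := h1.add h2
  have e : delt ε = fun x => Bb ε (2 * x + 2) + bet ε (2 * x + 2) := rfl
  rw [e]
  simpa using this

include hε in
lemma sum_mu_Sev_le (K : ℕ) : ∑ j ∈ Sev K, mu ε j ≤ Wc ε := by
  rw [sum_mu_Sev hε K]
  linarith [delt_nonneg hε K]

include hε in
lemma Wc_pos : 0 < Wc ε := by
  have h0 : (0:ℤ) ∈ Sev 0 := by rw [Sev_mem]; omega
  have h1 := Finset.single_le_sum (f := mu ε) (fun j _ => (mu_pos hε j).le) h0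
  rw [mu_zero hε] at h1
  have hle := sum_mu_Sev_le hε 0
  linarith

end classsums


noncomputable def Aa (ε : ℝ) : ℝ := ⨅ n, aseq ε n

noncomputable def thet (ε : ℝ) (K n : ℕ) : ℝ :=
  Real.sqrt (dseq ε n / (nu ε (2*K) * ((1-ε)/2)^2))

section finalprep
variable {ε : ℝ} (hε : ε ∈ Set.Ioo (1 / 2 : ℝ) 1)
include hε

lemma aseq_tendsto : Tendsto (aseq ε) atTop (nhds (Aa ε)) :=
  tendsto_atTop_ciInf (aseq_antitone hε)
    ⟨0, by rintro x ⟨n, rfl⟩; exact aseq_nonneg hε n⟩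

lemma dseq_tendsto : Tendsto (dseq ε) atTop (nhds 0) := by
  have h1 := aseq_tendsto hε
  have h2 : Tendsto (fun n => aseq ε (n+1)) atTop (nhds (Aa ε)) :=
    h1.comp (tendsto_add_atTop_nat 1)
  have h3 := h1.sub h2
  rw [sub_self] at h3
  apply h3.congr
  intro n
  have := aseq_succ hε n
  linarith

lemma diff_sq_le (n : ℕ) (j : ℤ) (hj : j.natAbs ≤ n+1) :
    mu ε j * gR ε j * gL ε j * (gg ε n (j+1) - gg ε n (j-1))^2 ≤ dseq ε n := by
  apply Finset.single_le_sum (f := fun j =>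
    mu ε j * gR ε j * gL ε j * (gg ε n (j+1) - gg ε n (j-1))^2)
  · intro i _
    have h1 := mu_pos hε i
    have h2 := gR_nonneg hε i
    have h3 := gL_nonneg hε i
    positivity
  · simp only [Finset.mem_Icc]
    omega

lemma osc_step (n K : ℕ) (j : ℤ) (hj : j.natAbs ≤ 2*K) (hn : 2*K ≤ n + 1) :
    (gg ε n (j+1) - gg ε n (j-1))^2 ≤ dseq ε n / (nu ε (2*K) * ((1-ε)/2)^2) := by
  have hc : (0:ℝ) < nu ε (2*K) * ((1-ε)/2)^2 := by
    have h1 := nu_pos hε (2*K)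
    have h2 := hε.2
    have : (0:ℝ) < (1-ε)/2 := by linarith
    positivity
  rw [le_div_iff₀ hc]
  have hterm := diff_sq_le hε n j (by omega)
  have hmu : nu ε (2*K) ≤ mu ε j := by
    unfold mu
    exact nu_antitone hε (by omega)
  have hR := gR_lb hε j
  have hL := gL_lb hε j
  have hRn := gR_nonneg hε j
  have hLn := gL_nonneg hε j
  have hmun := (nu_pos hε (2*K)).le
  have h2 := hε.2
  have h1e : (0:ℝ) ≤ (1-ε)/2 := by linarith
  have hsq : (0:ℝ) ≤ (gg ε n (j+1) - gg ε n (j-1))^2 := sq_nonneg _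
  have key : nu ε (2*K) * ((1-ε)/2)^2 * (gg ε n (j+1) - gg ε n (j-1))^2
      ≤ mu ε j * gR ε j * gL ε j * (gg ε n (j+1) - gg ε n (j-1))^2 := by
    apply mul_le_mul_of_nonneg_right _ hsq
    calc nu ε (2*K) * ((1-ε)/2)^2 = nu ε (2*K) * ((1-ε)/2) * ((1-ε)/2) := by ring
    _ ≤ mu ε j * gR ε j * gL ε j :=
        mul_le_mul (mul_le_mul hmu hR h1e (mu_pos hε j).le) hL h1e
          (mul_nonneg (mu_pos hε j).le hRn)
  calc (gg ε n (j+1) - gg ε n (j-1))^2 * (nu ε (2*K) * ((1-ε)/2)^2)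
      = nu ε (2*K) * ((1-ε)/2)^2 * (gg ε n (j+1) - gg ε n (j-1))^2 := by ring
  _ ≤ mu ε j * gR ε j * gL ε j * (gg ε n (j+1) - gg ε n (j-1))^2 := key
  _ ≤ dseq ε n := hterm

lemma thet_nonneg (K n : ℕ) : 0 ≤ thet ε K n := Real.sqrt_nonneg _

lemma osc_abs (n K : ℕ) (j : ℤ) (hj : j.natAbs ≤ 2*K) (hn : 2*K ≤ n + 1) :
    |gg ε n (j+1) - gg ε n (j-1)| ≤ thet ε K n := by
  rw [← Real.sqrt_sq_eq_abs]
  exact Real.sqrt_le_sqrt (osc_step hε n K j hj hn)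

lemma osc_pos_side (n K : ℕ) (hK : 1 ≤ K) (hn : 2*K ≤ n + 1) :
    ∀ i : ℕ, i ≤ K → |gg ε n (2*(i:ℤ)) - gg ε n 0| ≤ (i:ℝ) * thet ε K n := by
  intro i
  induction i with
  | zero => intro _; simp
  | succ i ih =>
    intro hiK
    have hstep : |gg ε n (2*(i:ℤ)+2) - gg ε n (2*(i:ℤ))| ≤ thet ε K n := by
      have := osc_abs hε n K (2*(i:ℤ)+1) (by omega) hn
      rw [show 2*(i:ℤ)+1+1 = 2*(i:ℤ)+2 from by ring,
          show 2*(i:ℤ)+1-1 = 2*(i:ℤ) from by ring] at this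
      exact this
    have hprev := ih (by omega)
    have hcast : (((i+1:ℕ)):ℤ) = (i:ℤ)+1 := by push_cast; ring
    rw [hcast, show 2*((i:ℤ)+1) = 2*(i:ℤ)+2 from by ring]
    calc |gg ε n (2*(i:ℤ)+2) - gg ε n 0|
        ≤ |gg ε n (2*(i:ℤ)+2) - gg ε n (2*(i:ℤ))| + |gg ε n (2*(i:ℤ)) - gg ε n 0| :=
          abs_sub_le _ _ _
    _ ≤ thet ε K n + (i:ℝ) * thet ε K n := add_le_add hstep hprev
    _ = ((i+1:ℕ):ℝ) * thet ε K n := by push_cast; ring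

lemma osc_neg_side (n K : ℕ) (hK : 1 ≤ K) (hn : 2*K ≤ n + 1) :
    ∀ i : ℕ, i ≤ K → |gg ε n (-(2*(i:ℤ))) - gg ε n 0| ≤ (i:ℝ) * thet ε K n := by
  intro i
  induction i with
  | zero => intro _; simp
  | succ i ih =>
    intro hiK
    have hstep : |gg ε n (-(2*(i:ℤ))) - gg ε n (-(2*(i:ℤ))-2)| ≤ thet ε K n := by
      have := osc_abs hε n K (-(2*(i:ℤ))-1) (by omega) hn
      rw [show -(2*(i:ℤ))-1+1 = -(2*(i:ℤ)) from by ring,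
          show -(2*(i:ℤ))-1-1 = -(2*(i:ℤ))-2 from by ring] at this
      exact this
    have hprev := ih (by omega)
    have hcast : (((i+1:ℕ)):ℤ) = (i:ℤ)+1 := by push_cast; ring
    rw [hcast, show -(2*((i:ℤ)+1)) = -(2*(i:ℤ))-2 from by ring]
    calc |gg ε n (-(2*(i:ℤ))-2) - gg ε n 0|
        ≤ |gg ε n (-(2*(i:ℤ))-2) - gg ε n (-(2*(i:ℤ)))| + |gg ε n (-(2*(i:ℤ))) - gg ε n 0| :=
          abs_sub_le _ _ _
    _ ≤ thet ε K n + (i:ℝ) * thet ε K n := by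
        rw [abs_sub_comm]
        exact add_le_add hstep hprev
    _ = ((i+1:ℕ):ℝ) * thet ε K n := by push_cast; ring

lemma osc_glob (n K : ℕ) (hK : 1 ≤ K) (hn : 2*K ≤ n + 1) (u : ℤ) (hu : u ∈ Sev K) :
    |gg ε n u - gg ε n 0| ≤ (K:ℝ) * thet ε K n := by
  rw [Sev_mem] at hu
  obtain ⟨⟨c, hc⟩, habs⟩ := hu
  subst hc
  have hth := thet_nonneg hε K n
  rcases le_or_gt 0 c with hcpos | hcneg
  · have hi : c = ((c.toNat : ℕ) : ℤ) := by omega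
    have h1 := osc_pos_side hε n K hK hn c.toNat (by omega)
    rw [← hi] at h1
    calc |gg ε n (2*c) - gg ε n 0| ≤ ((c.toNat : ℕ):ℝ) * thet ε K n := h1
    _ ≤ (K:ℝ) * thet ε K n := by
        apply mul_le_mul_of_nonneg_right _ hth
        exact_mod_cast (by omega : c.toNat ≤ K)
  · have hi : c = -(((-c).toNat : ℕ) : ℤ) := by omega
    have h1 := osc_neg_side hε n K hK hn (-c).toNat (by omega)
    rw [show -(2*(((-c).toNat : ℕ):ℤ)) = 2*(-((((-c).toNat : ℕ)):ℤ)) from by ring, ← hi] at h1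
    calc |gg ε n (2*c) - gg ε n 0| ≤ (((-c).toNat : ℕ):ℝ) * thet ε K n := h1
    _ ≤ (K:ℝ) * thet ε K n := by
        apply mul_le_mul_of_nonneg_right _ hth
        exact_mod_cast (by omega : (-c).toNat ≤ K)

end finalprep


section mass
variable {ε : ℝ} (hε : ε ∈ Set.Ioo (1 / 2 : ℝ) 1)
include hε

lemma Sev_sub {K m : ℕ} (h : K ≤ m) : Sev K ⊆ Sev m := by
  intro u hu
  rw [Sev_mem] at hu ⊢
  omega

lemma Sev_sub_Icc {K m : ℕ} (h : K ≤ m) :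
    Sev K ⊆ Finset.Icc (-((2*m:ℕ):ℤ)) ((2*m:ℕ):ℤ) := by
  intro u hu
  rw [Sev_mem] at hu
  simp only [Finset.mem_Icc]
  omega

lemma mass_upper (m K : ℕ) (hK : K ≤ m) : ∑ u ∈ Sev K, gP ε (2*m) u ≤ 1 := by
  have h := Finset.sum_le_sum_of_subset_of_nonneg (Sev_sub_Icc hε hK)
    (fun j _ _ => gP_nonneg hε (2*m) j)
  rw [gP_total hε (2*m)] at h
  exact h

lemma mass_lower (m K : ℕ) (hK : K ≤ m) :
    1 - delt ε K ≤ ∑ u ∈ Sev K, gP ε (2*m) u := by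
  have hsub := Sev_sub_Icc hε hK
  have htotal := gP_total hε (2*m)
  have hsdiff := Finset.sum_sdiff (f := gP ε (2*m)) hsub
  -- bound the complement sum
  have hsub2 : Sev m \ Sev K ⊆ (Finset.Icc (-((2*m:ℕ):ℤ)) ((2*m:ℕ):ℤ)) \ Sev K := by
    intro u hu
    simp only [Finset.mem_sdiff] at hu ⊢
    refine ⟨Sev_sub_Icc hε le_rfl hu.1, hu.2⟩
  have hvanish : ∀ u ∈ (Finset.Icc (-((2*m:ℕ):ℤ)) ((2*m:ℕ):ℤ)) \ Sev K,
      u ∉ Sev m \ Sev K → gP ε (2*m) u = 0 := by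
    intro u hu hnu
    simp only [Finset.mem_sdiff, Finset.mem_Icc] at hu hnu
    have hums : u ∉ Sev m := fun hc => hnu ⟨hc, hu.2⟩
    rw [Sev_mem] at hums
    push_neg at hums
    by_cases hdvd : 2 ∣ u
    · exfalso
      have := hums hdvd
      omega
    · apply gP_parity
      intro hc
      apply hdvd
      omega
  have heq : ∑ u ∈ Sev m \ Sev K, gP ε (2*m) u
      = ∑ u ∈ (Finset.Icc (-((2*m:ℕ):ℤ)) ((2*m:ℕ):ℤ)) \ Sev K, gP ε (2*m) u :=
    Finset.sum_subset hsub2 hvanish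
  have hbound : ∑ u ∈ Sev m \ Sev K, gP ε (2*m) u ≤ delt ε K := by
    have h1 : ∑ u ∈ Sev m \ Sev K, gP ε (2*m) u ≤ ∑ u ∈ Sev m \ Sev K, mu ε u :=
      Finset.sum_le_sum (fun u _ => gP_le_mu hε (2*m) u)
    have h2 := Finset.sum_sdiff (f := mu ε) (Sev_sub hε hK)
    have h3 := sum_mu_Sev hε K
    have h4 := sum_mu_Sev hε m
    have h5 := delt_nonneg hε m
    -- h2 : Σ_{Sevm \ SevK} mu + Σ_{SevK} mu = Σ_{Sevm} mu
    linarith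
  linarith

end mass

section finalthm
variable {ε : ℝ} (hε : ε ∈ Set.Ioo (1 / 2 : ℝ) 1)
include hε

lemma Wc_eq : Wc ε = ε/(2*ε-1) := by
  have h2e := twoeps hε
  have h0 := eps_pos hε
  unfold Wc
  rw [Bb_one hε]
  field_simp
  ring

lemma Wc_inv : 1 / Wc ε = 2 - 1/ε := by
  have h2e := twoeps hε
  have h0 := eps_pos hε
  rw [Wc_eq hε, one_div_div]
  field_simp

lemma S_ge_one (K : ℕ) : 1 ≤ Wc ε - delt ε K := by
  rw [← sum_mu_Sev hε K]
  have h0 : (0:ℤ) ∈ Sev K := by rw [Sev_mem]; omega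
  have h1 := Finset.single_le_sum (f := mu ε) (fun j _ => (mu_pos hε j).le) h0
  rw [mu_zero hε] at h1
  exact h1


lemma gP_origin_eq (m : ℕ) : gP ε (2*m) 0 = gg ε (2*m) 0 := by
  rw [gg, mu_zero hε, div_one]

lemma sandwich (m K : ℕ) (hK : 1 ≤ K) (hKm : K ≤ m) :
    (1 - delt ε K)/(Wc ε - delt ε K) - (K:ℝ)*thet ε K (2*m) ≤ gP ε (2*m) 0
    ∧ gP ε (2*m) 0 ≤ 1/(Wc ε - delt ε K) + (K:ℝ)*thet ε K (2*m) := by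
  have hS := sum_mu_Sev hε K
  have hS1 := S_ge_one hε K
  have hSpos : (0:ℝ) < Wc ε - delt ε K := by linarith
  have hθ0 : 0 ≤ (K:ℝ)*thet ε K (2*m) :=
    mul_nonneg (Nat.cast_nonneg K) (thet_nonneg hε K (2*m))
  have hosc : ∀ u ∈ Sev K, |gg ε (2*m) u - gg ε (2*m) 0| ≤ (K:ℝ)*thet ε K (2*m) :=
    fun u hu => osc_glob hε (2*m) K hK (by omega) u hu
  have hup : ∑ u ∈ Sev K, mu ε u * gg ε (2*m) 0
      ≤ ∑ u ∈ Sev K, (gP ε (2*m) u + mu ε u * ((K:ℝ)*thet ε K (2*m))) := by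
    apply Finset.sum_le_sum
    intro u hu
    have h1 := (abs_le.mp (hosc u hu)).1
    have h2 := (mu_pos hε u).le
    have h3 : gg ε (2*m) 0 ≤ gg ε (2*m) u + (K:ℝ)*thet ε K (2*m) := by linarith
    have h4 : mu ε u * gg ε (2*m) 0 ≤ mu ε u * (gg ε (2*m) u + (K:ℝ)*thet ε K (2*m)) :=
      mul_le_mul_of_nonneg_left h3 h2
    have h5 : mu ε u * (gg ε (2*m) u + (K:ℝ)*thet ε K (2*m))
        = gP ε (2*m) u + mu ε u * ((K:ℝ)*thet ε K (2*m)) := by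
      rw [gP_eq_mu_gg hε (2*m) u]; ring
    linarith
  have hlo : ∑ u ∈ Sev K, gP ε (2*m) u
      ≤ ∑ u ∈ Sev K, (mu ε u * gg ε (2*m) 0 + mu ε u * ((K:ℝ)*thet ε K (2*m))) := by
    apply Finset.sum_le_sum
    intro u hu
    have h1 := (abs_le.mp (hosc u hu)).2
    have h2 := (mu_pos hε u).le
    have h3 : gg ε (2*m) u ≤ gg ε (2*m) 0 + (K:ℝ)*thet ε K (2*m) := by linarith
    have h4 := mul_le_mul_of_nonneg_left h3 h2
    have h5 : mu ε u * (gg ε (2*m) 0 + (K:ℝ)*thet ε K (2*m))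
        = mu ε u * gg ε (2*m) 0 + mu ε u * ((K:ℝ)*thet ε K (2*m)) := by ring
    rw [gP_eq_mu_gg hε (2*m) u]
    linarith
  -- rewrite sums of products
  have hconst1 : ∑ u ∈ Sev K, mu ε u * gg ε (2*m) 0
      = (Wc ε - delt ε K) * gg ε (2*m) 0 := by
    rw [← hS, Finset.sum_mul]
  have hconst2 : ∑ u ∈ Sev K, mu ε u * ((K:ℝ)*thet ε K (2*m))
      = (Wc ε - delt ε K) * ((K:ℝ)*thet ε K (2*m)) := by
    rw [← hS, Finset.sum_mul]
  have hmassU := mass_upper hε m K hKm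
  have hmassL := mass_lower hε m K hKm
  rw [Finset.sum_add_distrib, hconst2] at hup hlo
  rw [hconst1] at hup
  -- hup : S * gg0 ≤ Σ gP + S * θ ≤ 1 + S θ
  -- hlo : 1 - δ ≤ Σ gP ≤ S gg0 + S θ
  rw [gP_origin_eq hε m]
  have hR : gg ε (2*m) 0 - (K:ℝ)*thet ε K (2*m) ≤ 1/(Wc ε - delt ε K) := by
    rw [le_div_iff₀ hSpos]
    nlinarith
  have hL : (1 - delt ε K)/(Wc ε - delt ε K) ≤ gg ε (2*m) 0 + (K:ℝ)*thet ε K (2*m) := by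
    rw [div_le_iff₀ hSpos]
    nlinarith
  exact ⟨by linarith, by linarith⟩

end finalthm


/-- For `ε ∈ (1/2, 1)` the probability of being at the origin after `2n` steps converges
to `2 − 1/ε`. -/
theorem gillis_origin_limit (ε : ℝ) (hε : ε ∈ Set.Ioo (1 / 2 : ℝ) 1) :
    Tendsto (fun n : ℕ => gP ε (2 * n) 0) atTop (nhds (2 - 1 / ε)) := by
  have hWc := Wc_pos hε
  rw [show (2:ℝ) - 1/ε = 1/Wc ε from (Wc_inv hε).symm]
  rw [Metric.tendsto_atTop]
  intro e he
  have hδ := delt_tendsto hε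
  have hden : Tendsto (fun K => Wc ε - delt ε K) atTop (nhds (Wc ε)) := by
    have h2 := Filter.Tendsto.sub
      (tendsto_const_nhds : Tendsto (fun _ : ℕ => Wc ε) atTop (nhds (Wc ε))) hδ
    simpa using h2
  have hF : Tendsto (fun K => 1/(Wc ε - delt ε K)) atTop (nhds (1/Wc ε)) :=
    tendsto_const_nhds.div hden (ne_of_gt hWc)
  have hnum : Tendsto (fun K => 1 - delt ε K) atTop (nhds 1) := by
    have h2 := Filter.Tendsto.sub
      (tendsto_const_nhds : Tendsto (fun _ : ℕ => (1:ℝ)) atTop (nhds 1)) hδ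
    simpa using h2
  have hG : Tendsto (fun K => (1 - delt ε K)/(Wc ε - delt ε K)) atTop (nhds (1/Wc ε)) :=
    hnum.div hden (ne_of_gt hWc)
  obtain ⟨K₁, hK₁⟩ := Metric.tendsto_atTop.mp hF (e/2) (by linarith)
  obtain ⟨K₂, hK₂⟩ := Metric.tendsto_atTop.mp hG (e/2) (by linarith)
  set K := K₁ + K₂ + 1 with hKdef
  have hF' := hK₁ K (by omega)
  have hG' := hK₂ K (by omega)
  rw [Real.dist_eq, abs_sub_lt_iff] at hF' hG'
  -- θ tendsto 0
  have h2m : Tendsto (fun m : ℕ => 2*m) atTop atTop := by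
    apply Filter.tendsto_atTop_mono (f := fun m : ℕ => m) (fun m => by beta_reduce; omega)
    exact Filter.tendsto_id
  have hd2 : Tendsto (fun m => dseq ε (2*m)) atTop (nhds 0) := (dseq_tendsto hε).comp h2m
  have hcpos : (0:ℝ) < nu ε (2*K) * ((1-ε)/2)^2 := by
    have h1 := nu_pos hε (2*K)
    have h2 := hε.2
    have : (0:ℝ) < (1-ε)/2 := by linarith
    positivity
  have hdiv : Tendsto (fun m => dseq ε (2*m) / (nu ε (2*K) * ((1-ε)/2)^2)) atTop (nhds 0) := by
    have := hd2.div_const (nu ε (2*K) * ((1-ε)/2)^2)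
    simpa using this
  have hsqrt : Tendsto (fun m => thet ε K (2*m)) atTop (nhds 0) := by
    have := hdiv.sqrt
    simpa [thet, Real.sqrt_zero] using this
  have hθt : Tendsto (fun m => (K:ℝ) * thet ε K (2*m)) atTop (nhds 0) := by
    have := hsqrt.const_mul (K:ℝ)
    simpa using this
  obtain ⟨M₀, hM₀⟩ := Metric.tendsto_atTop.mp hθt (e/2) (by linarith)
  refine ⟨max M₀ K, fun m hm => ?_⟩
  have hmM : M₀ ≤ m := le_trans (le_max_left _ _) hm
  have hmK : K ≤ m := le_trans (le_max_right _ _) hm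
  have hsand := sandwich hε m K (by omega) hmK
  have hθsmall : (K:ℝ) * thet ε K (2*m) < e/2 := by
    have := hM₀ m hmM
    rw [Real.dist_eq, sub_zero] at this
    have h0 : 0 ≤ (K:ℝ) * thet ε K (2*m) :=
      mul_nonneg (Nat.cast_nonneg K) (thet_nonneg hε K (2*m))
    rw [abs_of_nonneg h0] at this
    exact this
  rw [Real.dist_eq, abs_sub_lt_iff]
  constructor
  · -- gP - 1/Wc < e
    have := hsand.2
    have h1 := hF'.1
    linarith
  · -- 1/Wc - gP < e
    have := hsand.1
    have h2 := hG'.2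
    linarith
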